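/- For fixed γ > 2/d (so that m_c < ∞), the map θ ↦ m_θ := ∫_{ℝ^d} f_{∞,θ}(v) dv is a strictly decreasing continuous bijection from (0, ∞) onto (0, m_c). -/

import Mathlib

open MeasureTheory Real Set Filter
open scoped ENNReal

private lemma rpow_neg_le_rpow_neg {a b c : ℝ} (ha : 0 < a) (hab : a ≤ b) (hc : 0 ≤ c) :
    b ^ (-c) ≤ a ^ (-c) := by
  rw [Real.rpow_neg ha.le, Real.rpow_neg (ha.trans_le hab).le]
  exact inv_anti₀ (Real.rpow_pos_of_pos ha c) (Real.rpow_le_rpow ha.le hab hc)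

private lemma rpow_neg_lt_rpow_neg {a b c : ℝ} (ha : 0 < a) (hab : a < b) (hc : 0 < c) :
    b ^ (-c) < a ^ (-c) := by
  rw [Real.rpow_neg ha.le, Real.rpow_neg (ha.trans hab).le]
  exact inv_strictAnti₀ (Real.rpow_pos_of_pos ha c) (Real.rpow_lt_rpow ha.le hab hc)

private lemma integrableOn_ball_norm_rpow_neg {d : ℕ} {s : ℝ} (hs0 : 0 < s) (hsd : s < d) :
    IntegrableOn (fun v : EuclideanSpace ℝ (Fin d) => ‖v‖ ^ (-s))
      (Metric.ball (0 : EuclideanSpace ℝ (Fin d)) 1) volume := by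
  set E := EuclideanSpace ℝ (Fin d)
  set μ := volume.restrict (Metric.ball (0 : E) 1) with hμ
  have hmeas : Measurable fun v : E => ‖v‖ ^ (-s) := by fun_prop
  refine ⟨hmeas.aestronglyMeasurable, ?_⟩
  have hnn : ∀ v : E, 0 ≤ ‖v‖ ^ (-s) := fun v => Real.rpow_nonneg (norm_nonneg v) _
  rw [hasFiniteIntegral_iff_ofReal (Eventually.of_forall hnn)]
  rw [lintegral_eq_lintegral_meas_le μ (Eventually.of_forall hnn) hmeas.aemeasurable]
  have hsub : ∀ t : ℝ, 0 < t →
      {a : E | t ≤ ‖a‖ ^ (-s)} ⊆ Metric.closedBall 0 (t ^ (-s⁻¹)) := by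
    intro t ht a ha
    simp only [mem_setOf_eq] at ha
    rcases eq_or_ne a 0 with rfl | h0
    · simp only [norm_zero, Real.zero_rpow (neg_ne_zero.2 hs0.ne')] at ha
      exact absurd (ht.trans_le ha) (lt_irrefl 0)
    have hna : 0 < ‖a‖ := norm_pos_iff.2 h0
    have h2 := rpow_neg_le_rpow_neg ht ha (le_of_lt (by positivity : (0:ℝ) < s⁻¹))
    rw [← Real.rpow_mul (norm_nonneg a), neg_mul_neg, mul_inv_cancel₀ hs0.ne',
      Real.rpow_one] at h2
    exact Metric.mem_closedBall.2 (by rwa [dist_zero_right])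
  -- split the t-integral
  calc ∫⁻ t in Ioi (0:ℝ), μ {a : E | t ≤ ‖a‖ ^ (-s)}
      ≤ ∫⁻ t in Ioc (0:ℝ) 1 ∪ Ioi 1, μ {a : E | t ≤ ‖a‖ ^ (-s)} :=
        lintegral_mono_set Ioi_subset_Ioc_union_Ioi
    _ ≤ (∫⁻ t in Ioc (0:ℝ) 1, μ {a : E | t ≤ ‖a‖ ^ (-s)})
        + ∫⁻ t in Ioi (1:ℝ), μ {a : E | t ≤ ‖a‖ ^ (-s)} := lintegral_union_le _ _ _
    _ < ⊤ := by
      refine ENNReal.add_lt_top.2 ⟨?_, ?_⟩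
      · calc (∫⁻ t in Ioc (0:ℝ) 1, μ {a : E | t ≤ ‖a‖ ^ (-s)})
            ≤ ∫⁻ _t in Ioc (0:ℝ) 1, μ Set.univ := by
              refine lintegral_mono fun t => measure_mono (subset_univ _)
          _ < ⊤ := by
              rw [setLIntegral_const]
              refine ENNReal.mul_lt_top ?_ (by simp)
              rw [hμ, Measure.restrict_apply_univ]
              exact measure_ball_lt_top
      · have hb : ∀ t : ℝ, t ∈ Ioi (1:ℝ) → μ {a : E | t ≤ ‖a‖ ^ (-s)} ≤
            ENNReal.ofReal (t ^ (-(s⁻¹ * d))) * volume (Metric.ball (0:E) 1) := by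
          intro t ht
          have ht0 : (0:ℝ) < t := lt_trans one_pos ht
          have hr0 : (0:ℝ) ≤ t ^ (-s⁻¹) := Real.rpow_nonneg ht0.le _
          calc μ {a : E | t ≤ ‖a‖ ^ (-s)}
              ≤ volume (Metric.closedBall (0:E) (t ^ (-s⁻¹))) := by
                rw [hμ]
                exact le_trans (Measure.restrict_apply_le _ _) (measure_mono (hsub t ht0))
            _ = ENNReal.ofReal ((t ^ (-s⁻¹)) ^ (Module.finrank ℝ E)) *
                  volume (Metric.ball (0:E) 1) := Measure.addHaar_closedBall _ _ hr0
            _ = ENNReal.ofReal (t ^ (-(s⁻¹ * d))) * volume (Metric.ball (0:E) 1) := by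
                congr 2
                rw [← Real.rpow_natCast (t ^ (-s⁻¹)) _, ← Real.rpow_mul ht0.le]
                have : Module.finrank ℝ E = d := finrank_euclideanSpace_fin
                rw [this, neg_mul]
        calc (∫⁻ t in Ioi (1:ℝ), μ {a : E | t ≤ ‖a‖ ^ (-s)})
            ≤ ∫⁻ t in Ioi (1:ℝ), ENNReal.ofReal (t ^ (-(s⁻¹ * d))) *
                volume (Metric.ball (0:E) 1) :=
              setLIntegral_mono' measurableSet_Ioi hb
          _ < ⊤ := by
              rw [lintegral_mul_const' _ _ measure_ball_lt_top.ne]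
              refine ENNReal.mul_lt_top ?_ measure_ball_lt_top
              refine IntegrableOn.setLIntegral_lt_top ?_
              refine integrableOn_Ioi_rpow_of_lt ?_ one_pos
              rw [neg_lt_neg_iff, ← div_eq_inv_mul]
              exact (one_lt_div hs0).2 hsd

noncomputable def phi (γ t : ℝ) : ℝ := (Real.exp (γ * t) - 1) ^ (-(1/γ))

section phi
variable {γ : ℝ} (hγ : 0 < γ)
include hγ

private lemma base_pos {t : ℝ} (ht : 0 < t) : 0 < Real.exp (γ * t) - 1 := by
  have h : (0:ℝ) < γ * t := mul_pos hγ ht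
  have := Real.add_one_le_exp (γ * t)
  linarith

private lemma phi_pos {t : ℝ} (ht : 0 < t) : 0 < phi γ t :=
  Real.rpow_pos_of_pos (base_pos hγ ht) _

private lemma phi_lt {t₁ t₂ : ℝ} (ht : 0 < t₁) (h : t₁ < t₂) : phi γ t₂ < phi γ t₁ :=
  rpow_neg_lt_rpow_neg (base_pos hγ ht)
    (by
      have := Real.exp_lt_exp.2 (mul_lt_mul_of_pos_left h hγ)
      simpa using sub_lt_sub_right this 1)
    (by positivity)

private lemma phi_le {t₁ t₂ : ℝ} (ht : 0 < t₁) (h : t₁ ≤ t₂) : phi γ t₂ ≤ phi γ t₁ :=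
  rpow_neg_le_rpow_neg (base_pos hγ ht)
    (by
      have := Real.exp_le_exp.2 (mul_le_mul_of_nonneg_left h hγ.le)
      simpa using sub_le_sub_right this 1)
    (by positivity)

private lemma phi_exp_bound {t θ : ℝ} (ht : 0 < t) (hθ : 0 ≤ θ) :
    phi γ (t + θ) ≤ Real.exp (-θ) * phi γ t := by
  have h1 : Real.exp (γ * θ) * (Real.exp (γ * t) - 1) ≤ Real.exp (γ * (t + θ)) - 1 := by
    have he : (1:ℝ) ≤ Real.exp (γ * θ) := Real.one_le_exp (by positivity)
    have : Real.exp (γ * θ) * Real.exp (γ * t) = Real.exp (γ * (t + θ)) := by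
      rw [← Real.exp_add]; ring_nf
    nlinarith [Real.exp_pos (γ * t)]
  have h2 : phi γ (t + θ) ≤ (Real.exp (γ * θ) * (Real.exp (γ * t) - 1)) ^ (-(1/γ)) :=
    rpow_neg_le_rpow_neg (mul_pos (Real.exp_pos _) (base_pos hγ ht)) h1 (by positivity)
  refine h2.trans_eq ?_
  rw [Real.mul_rpow (Real.exp_pos _).le (base_pos hγ ht).le]
  congr 1
  rw [← Real.exp_mul]
  congr 1
  field_simp

private lemma phi_continuousAt {t : ℝ} (ht : 0 < t) : ContinuousAt (phi γ) t := by
  have hb := base_pos hγ ht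
  have hc : Continuous fun u : ℝ => Real.exp (γ * u) - 1 := by continuity
  exact ContinuousAt.comp (g := fun x : ℝ => x ^ (-(1/γ)))
    (Real.continuousAt_rpow_const _ _ (Or.inl hb.ne')) hc.continuousAt

end phi

private lemma integrable_gauss (d : ℕ) :
    Integrable (fun v : EuclideanSpace ℝ (Fin d) => Real.exp (-(‖v‖^2/2))) := by
  have h := (GaussianFourier.integrable_cexp_neg_mul_sq_norm_add (V := EuclideanSpace ℝ (Fin d))
      (b := (1/2 : ℂ)) (by norm_num) 0 0).norm
  refine h.congr (Filter.Eventually.of_forall fun v => ?_)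
  simp only [Complex.norm_exp, zero_mul, add_zero]
  congr 1
  simp [Complex.mul_re]
  norm_cast
  ring

private lemma integrable_G {d : ℕ} {γ : ℝ} (hd : 1 ≤ d) (hγ : 2 / (d:ℝ) < γ) :
    Integrable (fun v : EuclideanSpace ℝ (Fin d) => phi γ (‖v‖^2/2)) := by
  set E := EuclideanSpace ℝ (Fin d)
  have hd0 : (0:ℝ) < d := by exact_mod_cast hd
  have hγ0 : 0 < γ := lt_trans (by positivity) hγ
  have hsd : 2/γ < (d:ℝ) := by
    rw [div_lt_iff₀ hγ0]
    rw [div_lt_iff₀ hd0] at hγ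
    linarith [hγ]
  have hmeas : Measurable fun v : E => phi γ (‖v‖^2/2) := by
    unfold phi; fun_prop
  have hnn : ∀ v : E, 0 ≤ phi γ (‖v‖^2/2) := fun v => by
    unfold phi
    have : (0:ℝ) ≤ Real.exp (γ * (‖v‖^2/2)) - 1 := by
      have := Real.one_le_exp (by positivity : (0:ℝ) ≤ γ * (‖v‖^2/2))
      linarith
    exact Real.rpow_nonneg this _
  have h1 : IntegrableOn (fun v : E => phi γ (‖v‖^2/2)) (Metric.ball 0 1) volume := by
    refine Integrable.mono'
      ((integrableOn_ball_norm_rpow_neg (by positivity) hsd).const_mul ((γ/2) ^ (-(1/γ))))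
      hmeas.aestronglyMeasurable.restrict
      (Filter.Eventually.of_forall fun v => ?_)
    rw [Real.norm_eq_abs, abs_of_nonneg (hnn v)]
    rcases eq_or_ne v 0 with rfl | h0
    · have hL : phi γ (‖(0:E)‖^2/2) = 0 := by
        simp only [phi, norm_zero]
        norm_num
        exact Real.zero_rpow (neg_ne_zero.2 (by positivity : (0:ℝ) < γ⁻¹).ne')
      rw [hL, norm_zero, Real.zero_rpow (neg_ne_zero.2 (by positivity : (0:ℝ) < 2/γ).ne'),
        mul_zero]
    · have hx : (0:ℝ) < ‖v‖^2/2 := by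
        have : 0 < ‖v‖ := norm_pos_iff.2 h0
        positivity
      have hb : γ * (‖v‖^2/2) ≤ Real.exp (γ * (‖v‖^2/2)) - 1 := by
        have := Real.add_one_le_exp (γ * (‖v‖^2/2))
        linarith
      have h2 : phi γ (‖v‖^2/2) ≤ (γ * (‖v‖^2/2)) ^ (-(1/γ)) :=
        rpow_neg_le_rpow_neg (by positivity) hb (by positivity)
      refine h2.trans ?_
      have he : γ * (‖v‖^2/2) = (γ/2) * ‖v‖^2 := by ring
      rw [he, Real.mul_rpow (by positivity) (by positivity),
        ← Real.rpow_natCast ‖v‖ 2, ← Real.rpow_mul (norm_nonneg v)]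
      have : (2:ℕ) * (-(1/γ)) = -(2/γ) := by push_cast; ring
      rw [this]
  have h2 : IntegrableOn (fun v : E => phi γ (‖v‖^2/2)) (Metric.ball 0 1)ᶜ volume := by
    have hC2 : (0:ℝ) < 1 - Real.exp (-(γ/2)) := by
      have : Real.exp (-(γ/2)) < 1 := Real.exp_lt_one_iff.2 (by linarith)
      linarith
    refine Integrable.mono'
      (((integrable_gauss d).const_mul ((1 - Real.exp (-(γ/2))) ^ (-(1/γ)))).integrableOn)
      hmeas.aestronglyMeasurable.restrict ?_
    rw [ae_restrict_iff' (measurableSet_ball.compl)]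
    refine Filter.Eventually.of_forall fun v hv => ?_
    have hv1 : (1:ℝ) ≤ ‖v‖ := by
      simp only [Set.mem_compl_iff, Metric.mem_ball, dist_zero_right, not_lt] at hv
      exact hv
    have hx : (1:ℝ)/2 ≤ ‖v‖^2/2 := by nlinarith
    have hxpos : (0:ℝ) < ‖v‖^2/2 := by linarith
    rw [Real.norm_eq_abs, abs_of_nonneg (hnn v)]
    have hkey : Real.exp (γ * (‖v‖^2/2)) * (1 - Real.exp (-(γ/2)))
        ≤ Real.exp (γ * (‖v‖^2/2)) - 1 := by
      have h3 : Real.exp (γ * (‖v‖^2/2)) * Real.exp (-(γ/2))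
          = Real.exp (γ * (‖v‖^2/2) - γ/2) := by rw [← Real.exp_add]; ring_nf
      have h4 : (1:ℝ) ≤ Real.exp (γ * (‖v‖^2/2) - γ/2) := by
        refine Real.one_le_exp ?_
        nlinarith
      nlinarith [Real.exp_pos (γ * (‖v‖^2/2))]
    have h5 : phi γ (‖v‖^2/2)
        ≤ (Real.exp (γ * (‖v‖^2/2)) * (1 - Real.exp (-(γ/2)))) ^ (-(1/γ)) :=
      rpow_neg_le_rpow_neg (by positivity) hkey (by positivity)
    refine h5.trans ?_
    rw [Real.mul_rpow (Real.exp_pos _).le hC2.le, ← Real.exp_mul]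
    have : γ * (‖v‖^2/2) * (-(1/γ)) = -(‖v‖^2/2) := by field_simp
    rw [this, mul_comm]
  rw [← integrableOn_univ, ← Set.union_compl_self (Metric.ball (0:E) 1)]
  exact h1.union h2

private lemma phi_nonneg {γ : ℝ} (hγ : 0 < γ) {t : ℝ} (ht : 0 ≤ t) : 0 ≤ phi γ t := by
  have : (0:ℝ) ≤ Real.exp (γ * t) - 1 := by
    have := Real.one_le_exp (by positivity : (0:ℝ) ≤ γ * t)
    linarith
  exact Real.rpow_nonneg this _

theorem stmt_4 (d : ℕ) (hd : 1 ≤ d) (γ : ℝ) (hγ : γ > 2 / (d : ℝ))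
    (f : ℝ → EuclideanSpace ℝ (Fin d) → ℝ)
    (hf : ∀ θ v, f θ v = (Real.exp (γ * (‖v‖ ^ 2 / 2 + θ)) - 1) ^ (-(1 / γ)))
    (m : ℝ → ℝ) (hm : ∀ θ, m θ = ∫ v, f θ v)
    (mc : ℝ) (hmc : mc = ∫ v : EuclideanSpace ℝ (Fin d),
      (Real.exp (γ * ‖v‖ ^ 2 / 2) - 1) ^ (-(1 / γ))) :
    StrictAntiOn m (Set.Ioi 0) ∧ ContinuousOn m (Set.Ioi 0) ∧
      Set.BijOn m (Set.Ioi 0) (Set.Ioo 0 mc) := by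
  have hd0 : (0:ℝ) < d := by exact_mod_cast hd
  have hγ0 : 0 < γ := lt_trans (by positivity) hγ
  haveI : Nontrivial (EuclideanSpace ℝ (Fin d)) := by
    refine Module.nontrivial_of_finrank_pos (R := ℝ) ?_
    rw [finrank_euclideanSpace_fin]
    omega
  have hfφ : ∀ θ (v : (EuclideanSpace ℝ (Fin d))), f θ v = phi γ (‖v‖^2/2 + θ) := fun θ v => by
    rw [hf]; rfl
  have hmfun : m = fun θ => ∫ v : (EuclideanSpace ℝ (Fin d)), f θ v := funext hm
  have hmcφ : mc = ∫ v : (EuclideanSpace ℝ (Fin d)), phi γ (‖v‖^2/2) := by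
    rw [hmc]
    congr 1
    funext v
    simp only [phi, mul_div_assoc]
  have hG : Integrable (fun v : (EuclideanSpace ℝ (Fin d)) => phi γ (‖v‖^2/2)) := integrable_G hd hγ
  have hae0 : ∀ᵐ v : (EuclideanSpace ℝ (Fin d)), v ≠ (0:(EuclideanSpace ℝ (Fin d))) := by
    rw [ae_iff]
    simp [not_not, Set.setOf_eq_eq_singleton, measure_singleton]
  have hmeasf : ∀ θ : ℝ, AEStronglyMeasurable (f θ) (volume : Measure (EuclideanSpace ℝ (Fin d))) := by
    intro θ
    have : Measurable fun v : (EuclideanSpace ℝ (Fin d)) => (Real.exp (γ * (‖v‖ ^ 2 / 2 + θ)) - 1) ^ (-(1 / γ)) := by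
      fun_prop
    refine (this.aestronglyMeasurable).congr ?_
    exact Filter.Eventually.of_forall fun v => (hf θ v).symm
  have hxθ : ∀ (v : EuclideanSpace ℝ (Fin d)) {θ : ℝ}, 0 < θ → (0:ℝ) < ‖v‖^2/2 + θ :=
    fun v θ h => add_pos_of_nonneg_of_pos (by positivity) h
  have hxpos : ∀ {v : (EuclideanSpace ℝ (Fin d))}, v ≠ 0 → (0:ℝ) < ‖v‖^2/2 := by
    intro v hv
    have : 0 < ‖v‖ := norm_pos_iff.2 hv
    positivity
  have hint : ∀ θ, 0 < θ → Integrable (f θ) (volume : Measure (EuclideanSpace ℝ (Fin d))) := by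
    intro θ hθ
    refine hG.mono' (hmeasf θ) ?_
    filter_upwards [hae0] with v hv
    rw [hfφ, Real.norm_eq_abs, abs_of_nonneg (phi_nonneg hγ0 (by positivity))]
    exact phi_le hγ0 (hxpos hv) (le_add_of_nonneg_right hθ.le)
  have hunivpos : (0:ℝ≥0∞) < volume (Set.univ : Set (EuclideanSpace ℝ (Fin d))) :=
    isOpen_univ.measure_pos volume ⟨0, trivial⟩
  have hpos : ∀ θ, 0 < θ → 0 < m θ := by
    intro θ hθ
    rw [hm]
    have hfpos : ∀ v : (EuclideanSpace ℝ (Fin d)), 0 < f θ v := fun v => by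
      rw [hfφ]; exact phi_pos hγ0 (hxθ v hθ)
    refine (integral_pos_iff_support_of_nonneg (fun v => (hfpos v).le) (hint θ hθ)).2 ?_
    have : Function.support (f θ) = Set.univ :=
      Set.eq_univ_of_forall fun v => (hfpos v).ne'
    rw [this]
    exact hunivpos
  have hstrict : StrictAntiOn m (Set.Ioi 0) := by
    intro a ha b hb hab
    rw [Set.mem_Ioi] at ha hb
    have hi : ∀ v : (EuclideanSpace ℝ (Fin d)), f b v < f a v := fun v => by
      rw [hfφ, hfφ]
      exact phi_lt hγ0 (hxθ v ha) (by linarith)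
    rw [hm, hm, ← sub_pos, ← integral_sub (hint a ha) (hint b hb)]
    refine (integral_pos_iff_support_of_nonneg
      (fun v => sub_nonneg.2 (hi v).le) ((hint a ha).sub (hint b hb))).2 ?_
    have : Function.support (fun v => f a v - f b v) = Set.univ :=
      Set.eq_univ_of_forall fun v => (sub_pos.2 (hi v)).ne'
    rw [this]
    exact hunivpos
  have hcomplpos : (0:ℝ≥0∞) < volume ({(0:(EuclideanSpace ℝ (Fin d)))}ᶜ) := by
    rw [measure_compl (measurableSet_singleton 0) (by simp [measure_singleton])]
    simpa [measure_singleton] using hunivpos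
  have hmlt : ∀ θ, 0 < θ → m θ < mc := by
    intro θ hθ
    rw [hm, hmcφ, ← sub_pos, ← integral_sub hG (hint θ hθ)]
    refine (integral_pos_iff_support_of_nonneg_ae ?_ (hG.sub (hint θ hθ))).2 ?_
    · filter_upwards [hae0] with v hv
      simp only [Pi.zero_apply, Pi.sub_apply]
      rw [hfφ]
      exact sub_nonneg.2 (phi_le hγ0 (hxpos hv) (le_add_of_nonneg_right hθ.le))
    · refine lt_of_lt_of_le hcomplpos (measure_mono ?_)
      intro v hv
      have hlt : f θ v < phi γ (‖v‖^2/2) := by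
        rw [hfφ]
        exact phi_lt hγ0 (hxpos hv) (by linarith)
      exact (sub_pos.2 hlt).ne'
  have hbound : ∀ θ, 0 < θ → m θ ≤ Real.exp (-θ) * mc := by
    intro θ hθ
    rw [hm, hmcφ, ← integral_const_mul]
    refine integral_mono_ae (hint θ hθ) (hG.const_mul _) ?_
    filter_upwards [hae0] with v hv
    rw [hfφ]
    exact phi_exp_bound hγ0 (hxpos hv) hθ.le
  have hcont : ContinuousOn m (Set.Ioi 0) := by
    intro θ₀ hθ₀
    rw [Set.mem_Ioi] at hθ₀
    refine ContinuousAt.continuousWithinAt ?_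
    rw [hmfun]
    refine continuousAt_of_dominated (bound := f (θ₀/2))
      (Filter.Eventually.of_forall hmeasf) ?_ (hint _ (by linarith)) ?_
    · have hev : ∀ᶠ θ in nhds θ₀, θ₀/2 < θ := eventually_gt_nhds (by linarith)
      filter_upwards [hev] with θ hθ
      filter_upwards [hae0] with v hv
      rw [hfφ, hfφ, Real.norm_eq_abs,
        abs_of_nonneg (phi_nonneg hγ0 (hxθ v (by linarith)).le)]
      exact phi_le hγ0 (by have := hxpos hv; linarith) (by linarith)
    · refine Filter.Eventually.of_forall fun v => ?_
      have hc : ContinuousAt (phi γ) (‖v‖^2/2 + θ₀) := phi_continuousAt hγ0 (by positivity)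
      have h2 : ContinuousAt (fun θ : ℝ => ‖v‖^2/2 + θ) θ₀ :=
        (continuous_const.add continuous_id).continuousAt
      have := hc.comp h2
      refine this.congr ?_
      filter_upwards with θ
      rw [hfφ]
      rfl
  have htend : Filter.Tendsto m (nhdsWithin (0:ℝ) (Set.Ioi 0)) (nhds mc) := by
    rw [hmfun, hmcφ]
    refine tendsto_integral_filter_of_dominated_convergence (fun v => phi γ (‖v‖^2/2))
      (Filter.Eventually.of_forall hmeasf) ?_ hG ?_
    · filter_upwards [self_mem_nhdsWithin] with θ hθ
      rw [Set.mem_Ioi] at hθ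
      filter_upwards [hae0] with v hv
      rw [hfφ, Real.norm_eq_abs, abs_of_nonneg (phi_nonneg hγ0 (by positivity))]
      exact phi_le hγ0 (hxpos hv) (le_add_of_nonneg_right hθ.le)
    · filter_upwards [hae0] with v hv
      have hc : ContinuousAt (phi γ) (‖v‖^2/2) := phi_continuousAt hγ0 (hxpos hv)
      have h2 : Filter.Tendsto (fun θ : ℝ => ‖v‖^2/2 + θ) (nhds 0) (nhds (‖v‖^2/2)) := by
        have hcnt : Continuous (fun θ : ℝ => ‖v‖^2/2 + θ) := by continuity
        simpa using hcnt.tendsto (0:ℝ)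
      have h3 : Filter.Tendsto (fun θ : ℝ => phi γ (‖v‖^2/2 + θ))
          (nhdsWithin (0:ℝ) (Set.Ioi 0)) (nhds (phi γ (‖v‖^2/2))) :=
        (hc.tendsto.comp h2).mono_left nhdsWithin_le_nhds
      refine h3.congr fun θ => ?_
      rw [hfφ]
  refine ⟨hstrict, hcont, ?_, hstrict.injOn, ?_⟩
  · intro θ hθ
    rw [Set.mem_Ioi] at hθ
    exact ⟨hpos θ hθ, hmlt θ hθ⟩
  · intro y hy
    obtain ⟨hy0, hymc⟩ := hy
    have hev : ∀ᶠ θ in nhdsWithin (0:ℝ) (Set.Ioi 0), y < m θ :=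
      htend.eventually (eventually_gt_nhds hymc)
    obtain ⟨θ₁, hθ₁y, hθ₁pos⟩ := (hev.and self_mem_nhdsWithin).exists
    obtain ⟨θ₂, hθ₂def⟩ : ∃ θ₂, θ₂ = θ₁ + |Real.log (mc / y)| + 1 := ⟨_, rfl⟩
    have habs := abs_nonneg (Real.log (mc / y))
    have hθ₂pos : 0 < θ₂ := by rw [hθ₂def]; linarith
    have hθ₁₂ : θ₁ < θ₂ := by rw [hθ₂def]; linarith
    have hmcpos : 0 < mc := lt_trans hy0 hymc
    have hmθ₂ : m θ₂ < y := by
      refine lt_of_le_of_lt (hbound θ₂ hθ₂pos) ?_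
      have hlog : Real.log (mc / y) < θ₂ := by
        have := le_abs_self (Real.log (mc / y))
        rw [hθ₂def]; linarith
      have : Real.exp (-θ₂) < Real.exp (-(Real.log (mc / y))) := by
        exact Real.exp_lt_exp.2 (by linarith)
      calc Real.exp (-θ₂) * mc < Real.exp (-(Real.log (mc / y))) * mc := by
            exact mul_lt_mul_of_pos_right this hmcpos
        _ = y := by
            rw [Real.exp_neg, Real.exp_log (by positivity)]
            field_simp
    have hIcc : Set.Icc θ₁ θ₂ ⊆ Set.Ioi (0:ℝ) := fun x hx =>
      Set.mem_Ioi.2 (lt_of_lt_of_le hθ₁pos hx.1)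
    have hIVT := intermediate_value_Icc' hθ₁₂.le (hcont.mono hIcc)
    have hyIcc : y ∈ Set.Icc (m θ₂) (m θ₁) := ⟨hmθ₂.le, hθ₁y.le⟩
    obtain ⟨x, hx, hmx⟩ := hIVT hyIcc
    exact ⟨x, hIcc hx, hmx⟩
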